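/- Let k be a field of characteristic zero, G an abelian group, and (R,Δ) a commutative G-graded differential k-algebra such that R is a graded field. Then contraction Q ↦ Q ∩ Z_Δ(R) and extension P ↦ RP are mutually inverse homeomorphisms between Δ-spec R and spec Z_Δ(R) (each equipped with its Zariski topology). Moreover, if R is a finitely generated (affine) k-algebra, contraction and extension also restrict to mutually inverse homeomorphisms between Δ-prim R and max Z_Δ(R). -/

import Mathlib

section Defs

variable {k R : Type*} [CommRing k] [CommRing R] [Algebra k R]

/-- An ideal stable under all derivations in `Δ`. -/
def IsDeltaIdeal (Δ : Set (Derivation k R R)) (I : Ideal R) : Prop :=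
  ∀ δ ∈ Δ, ∀ x ∈ I, δ x ∈ I

/-- The `Δ`-core of an ideal `J`: the largest `Δ`-stable ideal contained in `J`. -/
def deltaCore (Δ : Set (Derivation k R R)) (J : Ideal R) : Ideal R :=
  sSup {I : Ideal R | IsDeltaIdeal Δ I ∧ I ≤ J}

/-- A `Δ`-prime ideal: a proper `Δ`-ideal `Q` such that whenever a product of two
`Δ`-ideals lies in `Q`, one of them lies in `Q`. -/
def IsDeltaPrime (Δ : Set (Derivation k R R)) (Q : Ideal R) : Prop :=
  Q ≠ ⊤ ∧ IsDeltaIdeal Δ Q ∧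
    ∀ I J : Ideal R, IsDeltaIdeal Δ I → IsDeltaIdeal Δ J → I * J ≤ Q → I ≤ Q ∨ J ≤ Q

/-- A `Δ`-primitive ideal: the `Δ`-core of a maximal ideal. -/
def IsDeltaPrimitive (Δ : Set (Derivation k R R)) (P : Ideal R) : Prop :=
  ∃ M : Ideal R, M.IsMaximal ∧ deltaCore Δ M = P

end Defs

/-- The `Δ`-center of `R`: elements annihilated by every derivation in `Δ`. -/
def deltaCenter {k R : Type*} [CommRing k] [CommRing R] [Algebra k R]
    (Δ : Set (Derivation k R R)) : Subalgebra k R where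
  carrier := {r : R | ∀ δ ∈ Δ, δ r = 0}
  mul_mem' := by
    intro a b ha hb δ hδ
    rw [Derivation.leibniz, ha δ hδ, hb δ hδ, smul_zero, smul_zero, add_zero]
  add_mem' := by
    intro a b ha hb δ hδ
    rw [map_add, ha δ hδ, hb δ hδ, add_zero]
  algebraMap_mem' := by
    intro c δ hδ
    simp

/-- The homogeneous `k`-derivations of degree `d` with respect to a grading `𝒜`:
those `δ` with `δ(R_g) ⊆ R_{g+d}` for all `g`. -/
def homogeneousDerivations {k R G : Type*} [CommRing k] [CommRing R] [Algebra k R]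
    [AddCommGroup G] (𝒜 : G → Submodule k R) (d : G) :
    Submodule k (Derivation k R R) where
  carrier := {δ : Derivation k R R | ∀ g : G, ∀ x ∈ 𝒜 g, δ x ∈ 𝒜 (g + d)}
  add_mem' := by
    intro a b ha hb g x hx
    rw [Derivation.add_apply]
    exact Submodule.add_mem _ (ha g x hx) (hb g x hx)
  zero_mem' := by
    intro g x hx
    simp
  smul_mem' := by
    intro c δ hδ g x hx
    rw [Derivation.smul_apply]
    exact Submodule.smul_mem _ c (hδ g x hx)

/-- `R` is a graded field with respect to `𝒜`: a domain in which every nonzero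
homogeneous element is invertible. -/
def IsGradedField {k R G : Type*} [CommRing k] [CommRing R] [Algebra k R]
    (𝒜 : G → Submodule k R) : Prop :=
  IsDomain R ∧ ∀ (g : G) (x : R), x ∈ 𝒜 g → x ≠ 0 → IsUnit x


namespace DSH
open DirectSum

variable {k R G : Type*} [Field k] [CommRing R] [Algebra k R]
    [AddCommGroup G] [DecidableEq G]
    (𝒜 : G → Submodule k R) [GradedAlgebra 𝒜]

lemma decompose_mul_left {a : R} {e : G} (ha : a ∈ 𝒜 e) (x : R) (g : G) :
    (DirectSum.decompose 𝒜 (a * x) (e + g) : R) = a * DirectSum.decompose 𝒜 x g := by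
  induction x using DirectSum.Decomposition.inductionOn 𝒜 with
  | zero => simp
  | @homogeneous i y =>
      by_cases h : i = g
      · subst h
        rw [DirectSum.decompose_of_mem_same 𝒜 (SetLike.mul_mem_graded ha y.2),
          DirectSum.decompose_of_mem_same 𝒜 y.2]
      · rw [DirectSum.decompose_of_mem_ne 𝒜 y.2 h,
          DirectSum.decompose_of_mem_ne 𝒜 (SetLike.mul_mem_graded ha y.2)
            (fun hc => h (by exact add_left_cancel hc)), mul_zero]
  | add x y hx hy =>
      rw [mul_add, DirectSum.decompose_add, DirectSum.decompose_add, DFinsupp.add_apply,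
        DFinsupp.add_apply, Submodule.coe_add, Submodule.coe_add, hx, hy, mul_add]

lemma decompose_deriv {δ : Derivation k R R} {d : G}
    (hδ : δ ∈ homogeneousDerivations 𝒜 d) (x : R) (g : G) :
    δ (DirectSum.decompose 𝒜 x g : R) = (DirectSum.decompose 𝒜 (δ x) (g + d) : R) := by
  induction x using DirectSum.Decomposition.inductionOn 𝒜 with
  | zero => simp
  | @homogeneous i y =>
      by_cases h : i = g
      · subst h
        rw [DirectSum.decompose_of_mem_same 𝒜 y.2,
          DirectSum.decompose_of_mem_same 𝒜 (hδ _ _ y.2)]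
      · rw [DirectSum.decompose_of_mem_ne 𝒜 y.2 h, map_zero,
          DirectSum.decompose_of_mem_ne 𝒜 (hδ _ _ y.2)
            (fun hc => h (by exact add_right_cancel hc))]
  | add x y hx hy =>
      simp only [DirectSum.decompose_add, DFinsupp.add_apply, DirectSum.add_apply, Submodule.coe_add, map_add, hx, hy]

/-- In a graded domain, the inverse of a nonzero homogeneous element is homogeneous. -/
lemma inv_mem_neg (hdom : IsDomain R) {u v : R} {g : G} (hu : u ∈ 𝒜 g)
    (huv : u * v = 1) (hu0 : u ≠ 0) : v ∈ 𝒜 (-g) := by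
  classical
  have hzero : ∀ h : G, h ≠ -g → (DirectSum.decompose 𝒜 v h : R) = 0 := by
    intro h hh
    have h1 : (DirectSum.decompose 𝒜 (u * v) (g + h) : R) = u * DirectSum.decompose 𝒜 v h :=
      decompose_mul_left 𝒜 hu v h
    have hne : g + h ≠ 0 := by
      intro hc
      exact hh (by rw [eq_neg_iff_add_eq_zero, add_comm]; exact hc)
    rw [huv, DirectSum.decompose_of_mem_ne 𝒜 (SetLike.one_mem_graded 𝒜) (Ne.symm hne)] at h1
    rcases mul_eq_zero.mp h1.symm with h | h
    · exact absurd h hu0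
    · exact h.symm ▸ h
  have hv : v = (DirectSum.decompose 𝒜 v (-g) : R) := by
    conv_lhs => rw [← DirectSum.sum_support_decompose 𝒜 v]
    refine Finset.sum_eq_single (-g) (fun b _ hb => hzero b hb) (fun hm => ?_)
    rw [DFinsupp.notMem_support_iff.mp hm, ZeroMemClass.coe_zero]
  rw [hv]
  exact SetLike.coe_mem _

set_option linter.unusedSectionVars false

variable (Δ : Submodule k (Derivation k R R))

/-- If all homogeneous derivations in `Δ` kill `x`, then all of `Δ` kills `x`. -/
lemma kernel_trick (hΔ : Δ = ⨆ d : G, (homogeneousDerivations 𝒜 d ⊓ Δ)) (x : R)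
    (h : ∀ d : G, ∀ δ ∈ homogeneousDerivations 𝒜 d ⊓ Δ, δ x = 0) :
    ∀ δ ∈ Δ, δ x = 0 := by
  intro δ hδ
  let K : Submodule k (Derivation k R R) :=
    { carrier := {δ : Derivation k R R | δ x = 0}
      add_mem' := fun {a b} ha hb => by
        simp only [Set.mem_setOf_eq] at *
        rw [Derivation.add_apply, ha, hb, add_zero]
      zero_mem' := by simp
      smul_mem' := fun c δ hδ => by
        simp only [Set.mem_setOf_eq] at *
        rw [Derivation.smul_apply, hδ, smul_zero] }
  have hK : Δ ≤ K := by
    rw [hΔ]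
    exact iSup_le fun d => fun δ' hδ' => h d δ' hδ'
  exact hK hδ

/-- Homogeneous components of `Δ`-constants are `Δ`-constants. -/
lemma center_decompose (hΔ : Δ = ⨆ d : G, (homogeneousDerivations 𝒜 d ⊓ Δ)) {x : R}
    (hx : ∀ δ ∈ Δ, δ x = 0) (g : G) :
    ∀ δ ∈ Δ, δ (DirectSum.decompose 𝒜 x g : R) = 0 := by
  refine kernel_trick 𝒜 Δ hΔ _ (fun d δ hδ => ?_)
  rw [Submodule.mem_inf] at hδ
  rw [decompose_deriv 𝒜 hδ.1, hx δ hδ.2]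
  simp

/-- The span of a set of `Δ`-constants is a `Δ`-ideal. -/
lemma isDeltaIdeal_span {s : Set R} (hs : ∀ x ∈ s, ∀ δ ∈ Δ, δ x = 0) :
    IsDeltaIdeal (Δ : Set (Derivation k R R)) (Ideal.span s) := by
  intro δ hδ x hx
  induction hx using Submodule.span_induction with
  | mem y hy => rw [hs y hy δ hδ]; exact Ideal.zero_mem _
  | zero => rw [map_zero]; exact Ideal.zero_mem _
  | add y z hy hz hy' hz' => rw [map_add]; exact Ideal.add_mem _ hy' hz'
  | smul a y hy hy' =>
      rw [smul_eq_mul, Derivation.leibniz, smul_eq_mul, smul_eq_mul]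
      exact Ideal.add_mem _ (Ideal.mul_mem_left _ _ hy') (Ideal.mul_mem_right _ _ hy)

/-- **Key Lemma.** In a graded field, every `Δ`-ideal is contained in (hence equal to)
the span of its `Δ`-constant elements. -/
lemma deltaIdeal_le_span (hΔ : Δ = ⨆ d : G, (homogeneousDerivations 𝒜 d ⊓ Δ))
    (hgf : IsGradedField 𝒜) {I : Ideal R} (hI : IsDeltaIdeal (Δ : Set (Derivation k R R)) I) :
    I ≤ Ideal.span {r : R | r ∈ I ∧ ∀ δ ∈ Δ, δ r = 0} := by
  classical
  letI : IsDomain R := hgf.1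
  set J := Ideal.span {r : R | r ∈ I ∧ ∀ δ ∈ Δ, δ r = 0} with hJ
  suffices H : ∀ (n : ℕ) (S : Finset G) (x : R), x ∈ I → S.card ≤ n →
      (∀ g ∉ S, (DirectSum.decompose 𝒜 x g : R) = 0) → x ∈ J by
    intro x hx
    exact H _ (DFinsupp.support (DirectSum.decompose 𝒜 x)) x hx le_rfl (fun g hg => by
      rw [DFinsupp.notMem_support_iff.mp hg, ZeroMemClass.coe_zero])
  intro n
  induction n with
  | zero =>
      intro S x hxI hcard hsupp
      have hx0 : x = 0 := by
        have hS : S = ∅ := Finset.card_eq_zero.mp (Nat.le_zero.mp hcard)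
        conv_lhs => rw [← DirectSum.sum_support_decompose 𝒜 x]
        refine Finset.sum_eq_zero (fun g _ => hsupp g (by simp [hS]))
      rw [hx0]; exact J.zero_mem
  | succ n IH =>
      intro S x hxI hcard hsupp
      by_cases hx0 : x = 0
      · rw [hx0]; exact J.zero_mem
      have hex : ∃ g0, (DirectSum.decompose 𝒜 x g0 : R) ≠ 0 := by
        by_contra h
        push_neg at h
        refine hx0 ?_
        conv_lhs => rw [← DirectSum.sum_support_decompose 𝒜 x]
        exact Finset.sum_eq_zero (fun g _ => h g)
      obtain ⟨g0, hg0⟩ := hex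
      set u : R := (DirectSum.decompose 𝒜 x g0 : R) with hu
      have hu𝒜 : u ∈ 𝒜 g0 := SetLike.coe_mem _
      obtain ⟨v, huv⟩ := isUnit_iff_exists_inv.mp (hgf.2 g0 u hu𝒜 hg0)
      have hv𝒜 : v ∈ 𝒜 (-g0) := inv_mem_neg 𝒜 hgf.1 hu𝒜 huv hg0
      set x' := v * x with hx'def
      have hx'I : x' ∈ I := Ideal.mul_mem_left I v hxI
      have hcomp : ∀ j, (DirectSum.decompose 𝒜 x' j : R)
          = v * (DirectSum.decompose 𝒜 x (g0 + j) : R) := by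
        intro j
        have h1 := decompose_mul_left 𝒜 hv𝒜 x (g0 + j)
        rwa [neg_add_cancel_left] at h1
      set S' := S.image (fun s => -g0 + s) with hS'
      have hcardS' : S'.card ≤ n + 1 := le_trans Finset.card_image_le hcard
      have hsupp' : ∀ j ∉ S', (DirectSum.decompose 𝒜 x' j : R) = 0 := by
        intro j hj
        rw [hcomp, hsupp (g0 + j) (fun hc => hj (Finset.mem_image.mpr
          ⟨g0 + j, hc, by rw [neg_add_cancel_left]⟩)), mul_zero]
      have hx'0 : (DirectSum.decompose 𝒜 x' 0 : R) = 1 := by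
        rw [hcomp, add_zero, ← hu, mul_comm, huv]
      have h0S' : (0 : G) ∈ S' := by
        by_contra h
        rw [hsupp' 0 h] at hx'0
        exact zero_ne_one hx'0
      have hfin : x' ∈ J → x ∈ J := by
        intro hx'J
        have hx_eq : x = u * x' := by
          rw [hx'def, ← mul_assoc, huv, one_mul]
        rw [hx_eq]
        exact Ideal.mul_mem_left J u hx'J
      by_cases hxZ : ∀ d : G, ∀ δ ∈ homogeneousDerivations 𝒜 d ⊓ Δ, δ x' = 0
      · exact hfin (Ideal.subset_span ⟨hx'I, kernel_trick 𝒜 Δ hΔ x' hxZ⟩)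
      · push_neg at hxZ
        obtain ⟨d, δ, hδmem, hδne⟩ := hxZ
        rw [Submodule.mem_inf] at hδmem
        obtain ⟨hδhom, hδΔ⟩ := hδmem
        set t := δ x' with ht
        have htI : t ∈ I := hI δ hδΔ x' hx'I
        have htcomp : ∀ j, (DirectSum.decompose 𝒜 t (j + d) : R)
            = δ (DirectSum.decompose 𝒜 x' j : R) := fun j => (decompose_deriv 𝒜 hδhom x' j).symm
        have htsupp : ∀ h : G, (∀ j ∈ S', j ≠ 0 → h ≠ j + d) →
            (DirectSum.decompose 𝒜 t h : R) = 0 := by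
          intro h hcond
          have hhd : h - d + d = h := sub_add_cancel h d
          by_cases hmem : h - d ∈ S'
          · by_cases h0 : h - d = 0
            · rw [← hhd, htcomp, h0, hx'0]
              exact Derivation.map_one_eq_zero δ
            · exact absurd hhd.symm (hcond (h - d) hmem h0)
          · rw [← hhd, htcomp, hsupp' (h - d) hmem, map_zero]
        have hextg : ∃ g ∈ S', g ≠ 0 ∧ (DirectSum.decompose 𝒜 t (g + d) : R) ≠ 0 := by
          by_contra h
          push_neg at h
          refine hδne ?_
          show t = 0
          conv_lhs => rw [← DirectSum.sum_support_decompose 𝒜 t]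
          refine Finset.sum_eq_zero (fun h' _ => ?_)
          by_cases hc : ∃ j ∈ S', j ≠ 0 ∧ h' = j + d
          · obtain ⟨j, hj, hj0, rfl⟩ := hc
            exact h j hj hj0
          · push_neg at hc
            exact htsupp h' (fun j hj hj0 => hc j hj hj0)
        obtain ⟨g, hgS', hgne0, hwne⟩ := hextg
        set w : R := (DirectSum.decompose 𝒜 t (g + d) : R) with hwdef
        have hw𝒜 : w ∈ 𝒜 (g + d) := SetLike.coe_mem _
        obtain ⟨w', hww'⟩ := isUnit_iff_exists_inv.mp (hgf.2 (g + d) w hw𝒜 hwne)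
        have hw'𝒜 : w' ∈ 𝒜 (-(g + d)) := inv_mem_neg 𝒜 hgf.1 hw𝒜 hww' hwne
        set c := (DirectSum.decompose 𝒜 x' g : R) * w' with hc
        have hc𝒜 : c ∈ 𝒜 (-d) := by
          have h1 : c ∈ 𝒜 (g + -(g + d)) :=
            SetLike.mul_mem_graded (SetLike.coe_mem _) hw'𝒜
          have h2 : g + -(g + d) = -d := by abel
          rwa [h2] at h1
        set x₁ := x' - c * t with hx₁def
        have hx₁I : x₁ ∈ I := Ideal.sub_mem I hx'I (Ideal.mul_mem_left I c htI)
        have hctcomp : ∀ j, (DirectSum.decompose 𝒜 (c * t) j : R)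
            = c * (DirectSum.decompose 𝒜 t (d + j) : R) := by
          intro j
          have h1 := decompose_mul_left 𝒜 hc𝒜 t (d + j)
          rwa [neg_add_cancel_left] at h1
        have hx₁supp : ∀ j ∉ S'.erase g, (DirectSum.decompose 𝒜 x₁ j : R) = 0 := by
          intro j hj
          have hsub : (DirectSum.decompose 𝒜 x₁ j : R)
              = (DirectSum.decompose 𝒜 x' j : R) - (DirectSum.decompose 𝒜 (c * t) j : R) := by
            rw [hx₁def, DirectSum.decompose_sub, DFinsupp.sub_apply, AddSubgroupClass.coe_sub]
          by_cases hjg : j = g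
          · subst hjg
            rw [hsub, hctcomp, add_comm d j, ← hwdef, hc, mul_assoc, mul_comm w' w, hww', mul_one, sub_self]
          · have hjS' : j ∉ S' := fun hmem => hj (Finset.mem_erase.mpr ⟨hjg, hmem⟩)
            have hdt : (DirectSum.decompose 𝒜 t (d + j) : R) = 0 := by
              refine htsupp (d + j) (fun j' hj' _ hdj => hjS' ?_)
              have hjj' : j = j' := by
                have h3 : d + j = d + j' := by rw [hdj, add_comm]
                exact add_left_cancel h3
              rwa [hjj']
            rw [hsub, hsupp' j hjS', hctcomp, hdt, mul_zero, sub_zero]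
        have hcard1 : (S'.erase g).card ≤ n := by
          have h4 := Finset.card_erase_of_mem hgS'
          omega
        have hx₁J : x₁ ∈ J := IH (S'.erase g) x₁ hx₁I hcard1 hx₁supp
        set T := (S'.erase 0).image (fun s => s + d) with hT
        have htT : ∀ h ∉ T, (DirectSum.decompose 𝒜 t h : R) = 0 := by
          intro h hh
          refine htsupp h (fun j hj hj0 hEq => hh ?_)
          exact Finset.mem_image.mpr ⟨j, Finset.mem_erase.mpr ⟨hj0, hj⟩, hEq.symm⟩
        have hcardT : T.card ≤ n := by
          refine le_trans Finset.card_image_le ?_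
          have h5 := Finset.card_erase_of_mem h0S'
          omega
        have htJ : t ∈ J := IH T t htI hcardT htT
        refine hfin ?_
        have hx'eq : x' = x₁ + c * t := by rw [hx₁def]; ring
        rw [hx'eq]
        exact Ideal.add_mem J hx₁J (Ideal.mul_mem_left J c htJ)

/-- Inverses of nonzero `Δ`-constants are `Δ`-constants. -/
lemma zinv (hdom : IsDomain R) {z v : R} (hz : ∀ δ ∈ Δ, δ z = 0) (hz0 : z ≠ 0)
    (hzv : z * v = 1) : ∀ δ ∈ Δ, δ v = 0 := by
  intro δ hδ
  have h1 : δ (z * v) = 0 := by rw [hzv]; exact Derivation.map_one_eq_zero δ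
  rw [Derivation.leibniz, hz δ hδ, smul_zero, add_zero, smul_eq_mul] at h1
  rcases mul_eq_zero.mp h1 with h | h
  · exact absurd h hz0
  · exact h

set_option synthInstance.maxHeartbeats 1000000 in
set_option maxHeartbeats 1000000 in
/-- A `Δ`-constant-linear projection of the degree-zero part onto the degree-zero
part of the `Δ`-center. -/
lemma exists_pi0 (hgf : IsGradedField 𝒜) :
    ∃ p0 : R → R,
      (∀ x y : R, x ∈ 𝒜 0 → y ∈ 𝒜 0 → p0 (x + y) = p0 x + p0 y) ∧
      (∀ x : R, (∀ δ ∈ Δ, δ (p0 x) = 0) ∧ p0 x ∈ 𝒜 0) ∧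
      (∀ z : R, z ∈ 𝒜 0 → (∀ δ ∈ Δ, δ z = 0) → p0 z = z) ∧
      (∀ c x : R, c ∈ 𝒜 0 → (∀ δ ∈ Δ, δ c = 0) → x ∈ 𝒜 0 → p0 (c * x) = c * p0 x) := by
  classical
  letI : IsDomain R := hgf.1
  let K : Subalgebra k R :=
    { carrier := {r : R | (∀ δ ∈ Δ, δ r = 0) ∧ r ∈ 𝒜 0}
      mul_mem' := fun {a b} ha hb => ⟨fun δ hδ => by
          rw [Derivation.leibniz, ha.1 δ hδ, hb.1 δ hδ, smul_zero, smul_zero, add_zero],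
        by simpa using SetLike.mul_mem_graded ha.2 hb.2⟩
      add_mem' := fun {a b} ha hb => ⟨fun δ hδ => by rw [map_add, ha.1 δ hδ, hb.1 δ hδ, add_zero],
        Submodule.add_mem _ ha.2 hb.2⟩
      algebraMap_mem' := fun c => ⟨fun δ _ => by simp, by
        rw [Algebra.algebraMap_eq_smul_one]
        exact Submodule.smul_mem _ c (SetLike.one_mem_graded 𝒜)⟩ }
  have hKdef : ∀ x : R, x ∈ K ↔ ((∀ δ ∈ Δ, δ x = 0) ∧ x ∈ 𝒜 0) := fun _ => Iff.rfl
  have hKfield : IsField K := by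
    refine ⟨⟨0, 1, ?_⟩, mul_comm, ?_⟩
    · intro h01
      exact zero_ne_one (congrArg Subtype.val h01)
    · rintro ⟨a, ha⟩ h0
      have ha0 : a ≠ 0 := fun h => h0 (Subtype.ext h)
      obtain ⟨v, hav⟩ := isUnit_iff_exists_inv.mp (hgf.2 0 a ((hKdef a).mp ha).2 ha0)
      have hv0 : v ∈ 𝒜 0 := by
        simpa using inv_mem_neg 𝒜 hgf.1 ((hKdef a).mp ha).2 hav ha0
      have hvZ : ∀ δ ∈ Δ, δ v = 0 := zinv Δ hgf.1 ((hKdef a).mp ha).1 ha0 hav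
      exact ⟨⟨v, (hKdef v).mpr ⟨hvZ, hv0⟩⟩, Subtype.ext hav⟩
  letI : Field K := hKfield.toField
  let V' : Submodule K R :=
    { carrier := (𝒜 0 : Set R)
      add_mem' := fun ha hb => Submodule.add_mem _ ha hb
      zero_mem' := Submodule.zero_mem _
      smul_mem' := fun c x hx => by
        show c • x ∈ (𝒜 0 : Set R)
        rw [Algebra.smul_def]
        show (c : R) * x ∈ 𝒜 0
        simpa using SetLike.mul_mem_graded ((hKdef (c : R)).mp c.2).2 hx }
  have hV'def : ∀ x : R, x ∈ V' ↔ x ∈ 𝒜 0 := fun _ => Iff.rfl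
  let U' : Submodule K R :=
    { carrier := {r : R | (∀ δ ∈ Δ, δ r = 0) ∧ r ∈ 𝒜 0}
      add_mem' := fun {a b} ha hb =>
        (hKdef _).mp (K.add_mem ((hKdef a).mpr ha) ((hKdef b).mpr hb))
      zero_mem' := (hKdef 0).mp K.zero_mem
      smul_mem' := fun c x hx => by
        show c • x ∈ _
        rw [Algebra.smul_def]
        show (c : R) * x ∈ _
        exact (hKdef _).mp (K.mul_mem c.2 ((hKdef x).mpr hx)) }
  let p : Submodule K ↥V' := U'.comap V'.subtype
  obtain ⟨q, hq⟩ := Submodule.exists_isCompl p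
  let proj := Submodule.linearProjOfIsCompl p q hq
  refine ⟨fun x => ((proj ⟨(DirectSum.decompose 𝒜 x 0 : R), SetLike.coe_mem _⟩ : ↥V') : R),
    ?_, ?_, ?_, ?_⟩
  · intro x y hx hy
    dsimp only
    have harg : (⟨(DirectSum.decompose 𝒜 (x + y) 0 : R), SetLike.coe_mem _⟩ : ↥V')
        = (⟨(DirectSum.decompose 𝒜 x 0 : R), SetLike.coe_mem _⟩ : ↥V')
          + ⟨(DirectSum.decompose 𝒜 y 0 : R), SetLike.coe_mem _⟩ := by
      apply Subtype.ext
      simp [DirectSum.decompose_add]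
    rw [harg, map_add]
    rfl
  · intro x
    exact (proj ⟨(DirectSum.decompose 𝒜 x 0 : R), SetLike.coe_mem _⟩).2
  · intro z hz hzZ
    dsimp only
    have harg : (⟨(DirectSum.decompose 𝒜 z 0 : R), SetLike.coe_mem _⟩ : ↥V')
        = ⟨z, hz⟩ := Subtype.ext (DirectSum.decompose_of_mem_same 𝒜 hz)
    rw [harg]
    have hmem : (⟨z, hz⟩ : ↥V') ∈ p := by
      show V'.subtype _ ∈ U'
      exact ⟨hzZ, hz⟩
    have := Submodule.linearProjOfIsCompl_apply_left hq (⟨⟨z, hz⟩, hmem⟩ : ↥p)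
    exact congrArg (fun w : ↥p => ((w : ↥V') : R)) this
  · intro c x hc hcZ hx
    dsimp only
    have hcx : c * x ∈ 𝒜 0 := by simpa using SetLike.mul_mem_graded hc hx
    have harg : (⟨(DirectSum.decompose 𝒜 (c * x) 0 : R), SetLike.coe_mem _⟩ : ↥V')
        = (⟨c, (hKdef c).mpr ⟨hcZ, hc⟩⟩ : K) • ⟨x, hx⟩ := by
      apply Subtype.ext
      rw [DirectSum.decompose_of_mem_same 𝒜 hcx]
      show c * x = (⟨c, _⟩ : K) • x
      rw [Algebra.smul_def]
      rfl
    have hargx : (⟨(DirectSum.decompose 𝒜 x 0 : R), SetLike.coe_mem _⟩ : ↥V')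
        = ⟨x, hx⟩ := Subtype.ext (DirectSum.decompose_of_mem_same 𝒜 hx)
    rw [harg, hargx, map_smul]
    show ((⟨c, _⟩ : K) • (proj ⟨x, hx⟩ : ↥V') : R) = c * _
    rw [Algebra.smul_def]
    rfl

lemma constant_mul {a b : R} (ha : ∀ δ ∈ Δ, δ a = 0) (hb : ∀ δ ∈ Δ, δ b = 0) :
    ∀ δ ∈ Δ, δ (a * b) = 0 := fun δ hδ => by
  rw [Derivation.leibniz, ha δ hδ, hb δ hδ, smul_zero, smul_zero, add_zero]

/-- There is a nonzero `Δ`-constant homogeneous element of degree `g`. -/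
def Epred (g : G) : Prop := ∃ z : R, (∀ δ ∈ Δ, δ z = 0) ∧ z ∈ 𝒜 g ∧ z ≠ 0

lemma exists_pack (hgf : IsGradedField 𝒜) (g : G) (h : Epred 𝒜 Δ g) :
    ∃ zv : R × R, (∀ δ ∈ Δ, δ zv.1 = 0) ∧ zv.1 ∈ 𝒜 g ∧ zv.1 ≠ 0 ∧ zv.1 * zv.2 = 1 ∧
      (∀ δ ∈ Δ, δ zv.2 = 0) ∧ zv.2 ∈ 𝒜 (-g) := by
  obtain ⟨z, hzZ, hzg, hz0⟩ := h
  obtain ⟨v, hzv⟩ := isUnit_iff_exists_inv.mp (hgf.2 g z hzg hz0)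
  exact ⟨(z, v), hzZ, hzg, hz0, hzv, zinv Δ hgf.1 hzZ hz0 hzv, inv_mem_neg 𝒜 hgf.1 hzg hzv hz0⟩

open Classical in
noncomputable def zpair (hgf : IsGradedField 𝒜) (g : G) : R × R :=
  if h : Epred 𝒜 Δ g then (exists_pack 𝒜 Δ hgf g h).choose else (1, 1)

lemma zpair_spec (hgf : IsGradedField 𝒜) (g : G) (h : Epred 𝒜 Δ g) :
    (∀ δ ∈ Δ, δ (zpair 𝒜 Δ hgf g).1 = 0) ∧ (zpair 𝒜 Δ hgf g).1 ∈ 𝒜 g ∧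
      (zpair 𝒜 Δ hgf g).1 ≠ 0 ∧ (zpair 𝒜 Δ hgf g).1 * (zpair 𝒜 Δ hgf g).2 = 1 ∧
      (∀ δ ∈ Δ, δ (zpair 𝒜 Δ hgf g).2 = 0) ∧ (zpair 𝒜 Δ hgf g).2 ∈ 𝒜 (-g) := by
  rw [zpair, dif_pos h]
  exact (exists_pack 𝒜 Δ hgf g h).choose_spec

open Classical in
noncomputable def piG (hgf : IsGradedField 𝒜) (p0 : R → R) (g : G) (v : R) : R :=
  if Epred 𝒜 Δ g then (zpair 𝒜 Δ hgf g).1 * p0 (v * (zpair 𝒜 Δ hgf g).2) else 0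

/-- The `Δ`-constant-linear projection of `R` onto its `Δ`-center. -/
lemma exists_pi (hΔ : Δ = ⨆ d : G, (homogeneousDerivations 𝒜 d ⊓ Δ))
    (hgf : IsGradedField 𝒜) :
    ∃ π : R →+ R,
      (∀ x, ∀ δ ∈ Δ, δ (π x) = 0) ∧
      (∀ z, (∀ δ ∈ Δ, δ z = 0) → π z = z) ∧
      (∀ w x, (∀ δ ∈ Δ, δ w = 0) → π (w * x) = w * π x) := by
  classical
  letI : IsDomain R := hgf.1
  obtain ⟨p0, hp0add, hp0mem, hp0fix, hp0lin⟩ := exists_pi0 𝒜 Δ hgf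
  have hp00 : p0 0 = 0 := by
    have h1 := hp0add 0 0 (Submodule.zero_mem _) (Submodule.zero_mem _)
    rw [add_zero] at h1
    have h2 : p0 0 + p0 0 = p0 0 + 0 := by rw [add_zero]; exact h1.symm
    exact add_left_cancel h2
  have hmemz : ∀ (g : G) (y : R), y ∈ 𝒜 g → Epred 𝒜 Δ g → y * (zpair 𝒜 Δ hgf g).2 ∈ 𝒜 0 := by
    intro g y hy h
    have h1 := SetLike.mul_mem_graded hy (zpair_spec 𝒜 Δ hgf g h).2.2.2.2.2
    simpa using h1
  have hadd : ∀ g : G, ∀ a b : (𝒜 g), piG 𝒜 Δ hgf p0 g (↑(a + b)) =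
      piG 𝒜 Δ hgf p0 g ↑a + piG 𝒜 Δ hgf p0 g ↑b := by
    intro g a b
    by_cases h : Epred 𝒜 Δ g
    · simp only [piG, if_pos h]
      rw [Submodule.coe_add, add_mul, hp0add _ _ (hmemz g ↑a a.2 h) (hmemz g ↑b b.2 h), mul_add]
    · simp only [piG, if_neg h, add_zero]
  set π : R →+ R := (DirectSum.toAddMonoid
      (fun g => AddMonoidHom.mk' (fun v : (𝒜 g) => piG 𝒜 Δ hgf p0 g ↑v) (hadd g))).comp
    (DirectSum.decomposeAddEquiv 𝒜).toAddMonoidHom with hπdef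
  have hπhom : ∀ (g : G) (y : R), y ∈ 𝒜 g → π y = piG 𝒜 Δ hgf p0 g y := by
    intro g y hy
    show (DirectSum.toAddMonoid _) ((DirectSum.decomposeAddEquiv 𝒜) y) = _
    rw [DirectSum.decomposeAddEquiv_apply, DirectSum.decompose_of_mem 𝒜 hy,
      DirectSum.toAddMonoid_of]
    rfl
  refine ⟨π, ?_, ?_, ?_⟩
  · intro x
    induction x using DirectSum.Decomposition.inductionOn 𝒜 with
    | zero => rw [map_zero]; intro δ _; exact map_zero δ
    | @homogeneous g m =>
        rw [hπhom g ↑m m.2]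
        by_cases h : Epred 𝒜 Δ g
        · simp only [piG, if_pos h]
          exact constant_mul Δ (zpair_spec 𝒜 Δ hgf g h).1 (hp0mem _).1
        · simp only [piG, if_neg h]
          intro δ _
          exact map_zero δ
    | add a b ha hb =>
        intro δ hδ
        rw [map_add, map_add, ha δ hδ, hb δ hδ, add_zero]
  · intro z hz
    conv_lhs => rw [← DirectSum.sum_support_decompose 𝒜 z]
    conv_rhs => rw [← DirectSum.sum_support_decompose 𝒜 z]
    rw [map_sum]
    refine Finset.sum_congr rfl (fun g _ => ?_)
    have hzg : (DirectSum.decompose 𝒜 z g : R) ∈ 𝒜 g := SetLike.coe_mem _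
    have hzgZ : ∀ δ ∈ Δ, δ (DirectSum.decompose 𝒜 z g : R) = 0 :=
      center_decompose 𝒜 Δ hΔ hz g
    rw [hπhom g _ hzg]
    by_cases h0 : (DirectSum.decompose 𝒜 z g : R) = 0
    · rw [h0]
      by_cases h : Epred 𝒜 Δ g
      · simp only [piG, if_pos h, zero_mul, hp00, mul_zero]
      · simp only [piG, if_neg h]
    · have hE : Epred 𝒜 Δ g := ⟨_, hzgZ, hzg, h0⟩
      obtain ⟨hz1Z, hz1g, hz10, hz12, hz2Z, hz2g⟩ := zpair_spec 𝒜 Δ hgf g hE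
      simp only [piG, if_pos hE]
      rw [hp0fix _ (hmemz g _ hzg hE) (constant_mul Δ hzgZ hz2Z)]
      calc (zpair 𝒜 Δ hgf g).1 * ((DirectSum.decompose 𝒜 z g : R) * (zpair 𝒜 Δ hgf g).2)
          = (DirectSum.decompose 𝒜 z g : R) * ((zpair 𝒜 Δ hgf g).1 * (zpair 𝒜 Δ hgf g).2) := by
            ring
        _ = (DirectSum.decompose 𝒜 z g : R) := by rw [hz12, mul_one]
  · have hkey : ∀ (g h : G) (w' y : R), (∀ δ ∈ Δ, δ w' = 0) → w' ∈ 𝒜 g → y ∈ 𝒜 h →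
        π (w' * y) = w' * π y := by
      intro g h w' y hw'Z hw'g hyh
      by_cases hw'0 : w' = 0
      · rw [hw'0, zero_mul, map_zero, zero_mul]
      have hwy : w' * y ∈ 𝒜 (g + h) := SetLike.mul_mem_graded hw'g hyh
      rw [hπhom (g + h) _ hwy, hπhom h y hyh]
      by_cases hE : Epred 𝒜 Δ h
      · have hEg : Epred 𝒜 Δ (g + h) := by
          obtain ⟨z, hzZ, hzh, hz0⟩ := hE
          exact ⟨w' * z, constant_mul Δ hw'Z hzZ, SetLike.mul_mem_graded hw'g hzh,
            mul_ne_zero hw'0 hz0⟩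
        obtain ⟨hz1Z, hz1g, hz10, hz12, hz2Z, hz2g⟩ := zpair_spec 𝒜 Δ hgf (g + h) hEg
        obtain ⟨hy1Z, hy1g, hy10, hy12, hy2Z, hy2g⟩ := zpair_spec 𝒜 Δ hgf h hE
        simp only [piG, if_pos hE, if_pos hEg]
        have hc0 : w' * (zpair 𝒜 Δ hgf h).1 * (zpair 𝒜 Δ hgf (g + h)).2 ∈ 𝒜 0 := by
          have h1 : w' * (zpair 𝒜 Δ hgf h).1 * (zpair 𝒜 Δ hgf (g + h)).2
              ∈ 𝒜 (g + h + -(g + h)) :=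
            SetLike.mul_mem_graded (SetLike.mul_mem_graded hw'g hy1g) hz2g
          have h2 : g + h + -(g + h) = (0 : G) := by abel
          rwa [h2] at h1
        have hcZ : ∀ δ ∈ Δ, δ (w' * (zpair 𝒜 Δ hgf h).1 * (zpair 𝒜 Δ hgf (g + h)).2) = 0 :=
          constant_mul Δ (constant_mul Δ hw'Z hy1Z) hz2Z
        have hyy2 : y * (zpair 𝒜 Δ hgf h).2 ∈ 𝒜 0 := hmemz h y hyh hE
        have hargeq : w' * y * (zpair 𝒜 Δ hgf (g + h)).2
            = (w' * (zpair 𝒜 Δ hgf h).1 * (zpair 𝒜 Δ hgf (g + h)).2)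
              * (y * (zpair 𝒜 Δ hgf h).2) := by
          calc w' * y * (zpair 𝒜 Δ hgf (g + h)).2
              = w' * y * (zpair 𝒜 Δ hgf (g + h)).2
                * ((zpair 𝒜 Δ hgf h).1 * (zpair 𝒜 Δ hgf h).2) := by rw [hy12, mul_one]
            _ = (w' * (zpair 𝒜 Δ hgf h).1 * (zpair 𝒜 Δ hgf (g + h)).2)
                * (y * (zpair 𝒜 Δ hgf h).2) := by ring
        rw [hargeq, hp0lin _ _ hc0 hcZ hyy2]
        calc (zpair 𝒜 Δ hgf (g + h)).1 * (w' * (zpair 𝒜 Δ hgf h).1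
              * (zpair 𝒜 Δ hgf (g + h)).2 * p0 (y * (zpair 𝒜 Δ hgf h).2))
            = w' * ((zpair 𝒜 Δ hgf h).1 * p0 (y * (zpair 𝒜 Δ hgf h).2))
              * ((zpair 𝒜 Δ hgf (g + h)).1 * (zpair 𝒜 Δ hgf (g + h)).2) := by ring
          _ = w' * ((zpair 𝒜 Δ hgf h).1 * p0 (y * (zpair 𝒜 Δ hgf h).2)) := by
              rw [hz12, mul_one]
      · have hEg : ¬ Epred 𝒜 Δ (g + h) := by
          rintro ⟨z, hzZ, hzgh, hz0⟩
          apply hE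
          obtain ⟨v', hwv'⟩ := isUnit_iff_exists_inv.mp (hgf.2 g w' hw'g hw'0)
          have hv'g : v' ∈ 𝒜 (-g) := inv_mem_neg 𝒜 hgf.1 hw'g hwv' hw'0
          have hv'Z := zinv Δ hgf.1 hw'Z hw'0 hwv'
          have hv'0 : v' ≠ 0 := by
            intro hc
            rw [hc, mul_zero] at hwv'
            exact zero_ne_one hwv'
          refine ⟨v' * z, constant_mul Δ hv'Z hzZ, ?_, mul_ne_zero hv'0 hz0⟩
          have h1 : v' * z ∈ 𝒜 (-g + (g + h)) := SetLike.mul_mem_graded hv'g hzgh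
          rwa [neg_add_cancel_left] at h1
        simp only [piG, if_neg hE, if_neg hEg, mul_zero]
    intro w x hw
    induction x using DirectSum.Decomposition.inductionOn 𝒜 with
    | zero => rw [mul_zero, map_zero, mul_zero]
    | @homogeneous h m =>
        conv_lhs => rw [← DirectSum.sum_support_decompose 𝒜 w]
        conv_rhs => rw [← DirectSum.sum_support_decompose 𝒜 w]
        rw [Finset.sum_mul, map_sum, Finset.sum_mul]
        refine Finset.sum_congr rfl (fun g _ => ?_)
        exact hkey g h _ ↑m (center_decompose 𝒜 Δ hΔ hw g) (SetLike.coe_mem _) m.2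
    | add a b ha hb => rw [mul_add, map_add, map_add, ha, hb, mul_add]

end DSH


set_option maxHeartbeats 2000000 in
set_option synthInstance.maxHeartbeats 400000 in
/-- Let `(R,Δ)` be a commutative `G`-graded differential `k`-algebra
with `R` a graded field.  Then contraction `Q ↦ Q ∩ Z_Δ(R)` and extension `P ↦ RP` are
mutually inverse homeomorphisms between `Δ-spec R` and `spec Z_Δ(R)` (the Zariski-closed
subsets correspond), and if moreover `R` is an affine `k`-algebra they restrict to
mutually inverse homeomorphisms between `Δ-prim R` and `max Z_Δ(R)`. -/
theorem deltaSpec_homeomorphic_spec_center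
    {k R G : Type*} [Field k] [CharZero k] [CommRing R] [Algebra k R]
    [AddCommGroup G] [DecidableEq G]
    (𝒜 : G → Submodule k R) [GradedAlgebra 𝒜]
    (Δ : Submodule k (Derivation k R R))
    (hΔ : Δ = ⨆ d : G, (homogeneousDerivations 𝒜 d ⊓ Δ))
    (hgf : IsGradedField 𝒜) :
    -- contraction maps Δ-spec R to spec Z_Δ(R) and extension is a two-sided inverse
    (∀ Q : Ideal R, IsDeltaPrime (Δ : Set (Derivation k R R)) Q →
      (Ideal.comap (deltaCenter (Δ : Set (Derivation k R R))).val.toRingHom Q).IsPrime ∧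
      Ideal.span (Subtype.val ''
        ((Ideal.comap (deltaCenter (Δ : Set (Derivation k R R))).val.toRingHom Q) :
          Set (deltaCenter (Δ : Set (Derivation k R R))))) = Q) ∧
    -- extension maps spec Z_Δ(R) to Δ-spec R and contraction is a two-sided inverse
    (∀ P : Ideal (deltaCenter (Δ : Set (Derivation k R R))), P.IsPrime →
      IsDeltaPrime (Δ : Set (Derivation k R R))
        (Ideal.span (Subtype.val ''
          (P : Set (deltaCenter (Δ : Set (Derivation k R R)))))) ∧
      Ideal.comap (deltaCenter (Δ : Set (Derivation k R R))).val.toRingHom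
        (Ideal.span (Subtype.val ''
          (P : Set (deltaCenter (Δ : Set (Derivation k R R)))))) = P) ∧
    -- contraction is continuous: preimages of Zariski-closed sets are Zariski-closed
    (∀ I' : Ideal (deltaCenter (Δ : Set (Derivation k R R))), ∃ I : Ideal R,
      ∀ Q : Ideal R, IsDeltaPrime (Δ : Set (Derivation k R R)) Q →
        (I' ≤ Ideal.comap (deltaCenter (Δ : Set (Derivation k R R))).val.toRingHom Q ↔
          I ≤ Q)) ∧
    -- extension is continuous: preimages of Zariski-closed sets are Zariski-closed
    (∀ I : Ideal R, ∃ I' : Ideal (deltaCenter (Δ : Set (Derivation k R R))),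
      ∀ P : Ideal (deltaCenter (Δ : Set (Derivation k R R))), P.IsPrime →
        (I ≤ Ideal.span (Subtype.val ''
            (P : Set (deltaCenter (Δ : Set (Derivation k R R))))) ↔ I' ≤ P)) ∧
    -- if R is affine over k, the maps restrict to a correspondence between
    -- Δ-prim R and max Z_Δ(R)
    (Algebra.FiniteType k R →
      (∀ Q : Ideal R, IsDeltaPrimitive (Δ : Set (Derivation k R R)) Q →
        (Ideal.comap (deltaCenter (Δ : Set (Derivation k R R))).val.toRingHom Q).IsMaximal) ∧
      (∀ N : Ideal (deltaCenter (Δ : Set (Derivation k R R))), N.IsMaximal →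
        IsDeltaPrimitive (Δ : Set (Derivation k R R))
          (Ideal.span (Subtype.val ''
            (N : Set (deltaCenter (Δ : Set (Derivation k R R)))))))) := by
  classical
  letI : IsDomain R := hgf.1
  obtain ⟨π, hπZ, hπfix, hπmul⟩ := DSH.exists_pi 𝒜 Δ hΔ hgf
  set Z : Subalgebra k R := deltaCenter (Δ : Set (Derivation k R R)) with hZdef
  set ι : ↥Z →+* R := Z.val.toRingHom with hιdef
  have hmemZ : ∀ x : R, x ∈ Z ↔ ∀ δ ∈ Δ, δ x = 0 := fun _ => Iff.rfl
  have himg : ∀ I : Ideal R,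
      Subtype.val '' ((Ideal.comap ι I : Ideal ↥Z) : Set ↥Z)
        = {r : R | r ∈ I ∧ ∀ δ ∈ Δ, δ r = 0} := by
    intro I
    ext r
    constructor
    · rintro ⟨z, hzQ, rfl⟩
      exact ⟨hzQ, (hmemZ _).mp z.2⟩
    · rintro ⟨h1, h2⟩
      exact ⟨⟨r, (hmemZ r).mpr h2⟩, h1, rfl⟩
  have hpure : ∀ P : Ideal ↥Z,
      Ideal.comap ι (Ideal.span (Subtype.val '' (P : Set ↥Z))) = P := by
    intro P
    apply le_antisymm
    · intro z hz
      rw [Ideal.mem_comap] at hz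
      obtain ⟨c, hcsupp, hcsum⟩ := Submodule.mem_span_set.mp hz
      set PM : AddSubmonoid R :=
        { carrier := Subtype.val '' (P : Set ↥Z)
          add_mem' := by
            rintro a b ⟨za, hza, rfl⟩ ⟨zb, hzb, rfl⟩
            exact ⟨za + zb, P.add_mem hza hzb, rfl⟩
          zero_mem' := ⟨0, P.zero_mem, rfl⟩ } with hPM
      have hz' : (z : R) ∈ PM := by
        have hπz : π (z : R) = (z : R) := hπfix _ ((hmemZ _).mp z.2)
        have hcsum' : (c.sum fun mi r => r • mi) = (z : R) := hcsum
        rw [← hπz, ← hcsum', Finsupp.sum, map_sum]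
        refine AddSubmonoid.sum_mem PM (fun m hm => ?_)
        obtain ⟨pz, hpzP, hpz⟩ := hcsupp hm
        have h1 : π (c m • m) = m * π (c m) := by
          rw [smul_eq_mul, mul_comm]
          exact hπmul m (c m) (by rw [← hpz]; exact (hmemZ _).mp pz.2)
        rw [h1]
        refine ⟨pz * ⟨π (c m), (hmemZ _).mpr (hπZ (c m))⟩, P.mul_mem_right _ hpzP, ?_⟩
        show (pz : R) * π (c m) = m * π (c m)
        rw [hpz]
      obtain ⟨pz, hpzP, hpz⟩ := hz'
      rwa [← show pz = z from Subtype.ext hpz]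
    · intro p hp
      rw [Ideal.mem_comap]
      exact Ideal.subset_span ⟨p, hp, rfl⟩
  have hL : ∀ I : Ideal R, IsDeltaIdeal (Δ : Set (Derivation k R R)) I →
      I ≤ Ideal.span (Subtype.val '' ((Ideal.comap ι I : Ideal ↥Z) : Set ↥Z)) := by
    intro I hI
    rw [himg I]
    exact DSH.deltaIdeal_le_span 𝒜 Δ hΔ hgf hI
  have hLeq : ∀ I : Ideal R, IsDeltaIdeal (Δ : Set (Derivation k R R)) I →
      Ideal.span (Subtype.val '' ((Ideal.comap ι I : Ideal ↥Z) : Set ↥Z)) = I := by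
    intro I hI
    refine le_antisymm (Ideal.span_le.mpr ?_) (hL I hI)
    rintro r ⟨z, hz, rfl⟩
    exact hz
  have hDspan : ∀ s : Set R, (∀ x ∈ s, x ∈ Z) →
      IsDeltaIdeal (Δ : Set (Derivation k R R)) (Ideal.span s) :=
    fun s hs => DSH.isDeltaIdeal_span Δ (fun x hx => (hmemZ x).mp (hs x hx))
  have hext : ∀ P : Ideal ↥Z, P.IsPrime →
      IsDeltaPrime (Δ : Set (Derivation k R R))
        (Ideal.span (Subtype.val '' (P : Set ↥Z))) := by
    intro P hP
    have hDI := hDspan (Subtype.val '' (P : Set ↥Z)) (by rintro x ⟨zx, _, rfl⟩; exact zx.2)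
    refine ⟨?_, hDI, ?_⟩
    · intro h
      apply hP.ne_top
      rw [← hpure P, h, Ideal.comap_top]
    · intro I J hIdelta hJdelta hIJ
      by_contra hcon
      push_neg at hcon
      have h1 : ¬ (Ideal.comap ι I ≤ P) := by
        intro hc
        apply hcon.1
        calc I ≤ Ideal.span (Subtype.val '' ((Ideal.comap ι I : Ideal ↥Z) : Set ↥Z)) :=
              hL I hIdelta
          _ ≤ Ideal.span (Subtype.val '' (P : Set ↥Z)) :=
              Ideal.span_mono (Set.image_mono hc)
      have h2 : ¬ (Ideal.comap ι J ≤ P) := by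
        intro hc
        apply hcon.2
        calc J ≤ Ideal.span (Subtype.val '' ((Ideal.comap ι J : Ideal ↥Z) : Set ↥Z)) :=
              hL J hJdelta
          _ ≤ Ideal.span (Subtype.val '' (P : Set ↥Z)) :=
              Ideal.span_mono (Set.image_mono hc)
      obtain ⟨a, haI, haP⟩ := SetLike.not_le_iff_exists.mp h1
      obtain ⟨b, hbJ, hbP⟩ := SetLike.not_le_iff_exists.mp h2
      have hab : a * b ∈ P := by
        rw [← hpure P, Ideal.mem_comap, map_mul]
        refine hIJ (Ideal.mul_mem_mul ?_ ?_)
        · exact haI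
        · exact hbJ
      rcases hP.mem_or_mem hab with h | h
      · exact haP h
      · exact hbP h
  have hcontr : ∀ Q : Ideal R, IsDeltaPrime (Δ : Set (Derivation k R R)) Q →
      (Ideal.comap ι Q).IsPrime := by
    intro Q hQ
    obtain ⟨hQtop, hQdelta, hQprime⟩ := hQ
    constructor
    · intro h
      apply hQtop
      rw [Ideal.eq_top_iff_one]
      have h1 : (1 : ↥Z) ∈ Ideal.comap ι Q := by rw [h]; trivial
      simpa using h1
    · intro a b hab
      rw [Ideal.mem_comap, map_mul] at hab
      have hIa := hDspan {((a : ↥Z) : R)}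
        (by rintro x hx; rw [Set.mem_singleton_iff] at hx; rw [hx]; exact a.2)
      have hIb := hDspan {((b : ↥Z) : R)}
        (by rintro x hx; rw [Set.mem_singleton_iff] at hx; rw [hx]; exact b.2)
      have hmul : Ideal.span {((a : ↥Z) : R)} * Ideal.span {((b : ↥Z) : R)} ≤ Q := by
        rw [Ideal.span_singleton_mul_span_singleton]
        exact (Ideal.span_singleton_le_iff_mem Q).mpr hab
      rcases hQprime _ _ hIa hIb hmul with h | h
      · exact Or.inl ((Ideal.span_singleton_le_iff_mem Q).mp h)
      · exact Or.inr ((Ideal.span_singleton_le_iff_mem Q).mp h)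
  have hcoreD : ∀ M : Ideal R, IsDeltaIdeal (Δ : Set (Derivation k R R))
      (deltaCore (Δ : Set (Derivation k R R)) M) := by
    intro M
    have hsup : deltaCore (Δ : Set (Derivation k R R)) M
        = Ideal.span (⋃ i : {I : Ideal R //
            IsDeltaIdeal (Δ : Set (Derivation k R R)) I ∧ I ≤ M}, ((i : Ideal R) : Set R)) := by
      rw [deltaCore, sSup_eq_iSup', Submodule.iSup_eq_span]
      rfl
    rw [hsup]
    intro δ hδ x hx
    induction hx using Submodule.span_induction with
    | mem y hy =>
        obtain ⟨i, hys⟩ := Set.mem_iUnion.mp hy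
        exact Ideal.subset_span (Set.mem_iUnion.mpr ⟨i, i.2.1 δ hδ y hys⟩)
    | zero => rw [map_zero]; exact Ideal.zero_mem _
    | add y z hy hz hy' hz' => rw [map_add]; exact Ideal.add_mem _ hy' hz'
    | smul r y hy hy' =>
        rw [smul_eq_mul, Derivation.leibniz, smul_eq_mul, smul_eq_mul]
        exact Ideal.add_mem _ (Ideal.mul_mem_left _ _ hy') (Ideal.mul_mem_right _ _ hy)
  have hcore_le : ∀ M : Ideal R, deltaCore (Δ : Set (Derivation k R R)) M ≤ M :=
    fun M => sSup_le (fun I hI => hI.2)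
  have hcore_eq : ∀ M : Ideal R, deltaCore (Δ : Set (Derivation k R R)) M
      = Ideal.span (Subtype.val '' ((Ideal.comap ι M : Ideal ↥Z) : Set ↥Z)) := by
    intro M
    apply le_antisymm
    · calc deltaCore (Δ : Set (Derivation k R R)) M
          ≤ Ideal.span (Subtype.val ''
              ((Ideal.comap ι (deltaCore (Δ : Set (Derivation k R R)) M) : Ideal ↥Z) : Set ↥Z)) :=
            hL _ (hcoreD M)
        _ ≤ Ideal.span (Subtype.val '' ((Ideal.comap ι M : Ideal ↥Z) : Set ↥Z)) :=
            Ideal.span_mono (Set.image_mono (Ideal.comap_mono (hcore_le M)))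
    · refine le_sSup ⟨hDspan _ (by rintro x ⟨zx, _, rfl⟩; exact zx.2), ?_⟩
      rw [Ideal.span_le]
      rintro r ⟨zr, hzr, rfl⟩
      exact hzr
  refine ⟨fun Q hQ => ⟨hcontr Q hQ, hLeq Q hQ.2.1⟩, fun P hP => ⟨hext P hP, hpure P⟩,
    ?_, ?_, ?_⟩
  · intro I'
    refine ⟨Ideal.span (Subtype.val '' (I' : Set ↥Z)), fun Q _ => ⟨?_, ?_⟩⟩
    · intro h
      rw [Ideal.span_le]
      rintro r ⟨z, hz, rfl⟩
      exact h hz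
    · intro h z hz
      rw [Ideal.mem_comap]
      exact h (Ideal.subset_span ⟨z, hz, rfl⟩)
  · intro I
    set Ibar : Ideal R :=
      sInf {T : Ideal R | I ≤ T ∧ IsDeltaIdeal (Δ : Set (Derivation k R R)) T} with hIbar
    have hIbarD : IsDeltaIdeal (Δ : Set (Derivation k R R)) Ibar := by
      intro δ hδ x hx
      rw [hIbar, Ideal.mem_sInf] at hx ⊢
      intro T hT
      exact hT.2 δ hδ x (hx hT)
    have hIIbar : I ≤ Ibar := le_sInf (fun T hT => hT.1)
    refine ⟨Ideal.comap ι Ibar, fun P hP => ⟨?_, ?_⟩⟩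
    · intro h
      have hE : Ibar ≤ Ideal.span (Subtype.val '' (P : Set ↥Z)) :=
        sInf_le ⟨h, hDspan _ (by rintro x ⟨zx, _, rfl⟩; exact zx.2)⟩
      exact le_trans (Ideal.comap_mono hE) (le_of_eq (hpure P))
    · intro h
      calc I ≤ Ibar := hIIbar
        _ ≤ Ideal.span (Subtype.val '' ((Ideal.comap ι Ibar : Ideal ↥Z) : Set ↥Z)) :=
            hL _ hIbarD
        _ ≤ Ideal.span (Subtype.val '' (P : Set ↥Z)) :=
            Ideal.span_mono (Set.image_mono h)
  · intro hFT
    constructor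
    · rintro Q ⟨M, hM, rfl⟩
      have hcc : Ideal.comap ι (deltaCore (Δ : Set (Derivation k R R)) M)
          = Ideal.comap ι M := by
        apply le_antisymm (Ideal.comap_mono (hcore_le M))
        intro z hz
        rw [Ideal.mem_comap] at hz ⊢
        rw [hcore_eq M]
        exact Ideal.subset_span ⟨z, hz, rfl⟩
      rw [hcc]
      haveI := hM
      letI : Field (R ⧸ M) := Ideal.Quotient.field M
      haveI := hFT
      haveI : Algebra.FiniteType k (R ⧸ M) :=
        Algebra.FiniteType.of_surjective (Ideal.Quotient.mkₐ k M)
          (Ideal.Quotient.mkₐ_surjective k M)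
      haveI : Module.Finite k (R ⧸ M) := finite_of_finite_type_of_isJacobsonRing k (R ⧸ M)
      set S' : Subalgebra k (R ⧸ M) := Z.map (Ideal.Quotient.mkₐ k M) with hS'
      haveI : Algebra.IsIntegral k ↥S' :=
        ⟨fun x => (isIntegral_algHom_iff S'.val Subtype.val_injective).mp
          (Algebra.IsIntegral.isIntegral _)⟩
      have hSfield : IsField ↥S' := isField_of_isIntegral_of_isField' (Field.toIsField k)
      have hmne : Ideal.comap ι M ≠ ⊤ := by
        intro h
        refine hM.ne_top (Ideal.eq_top_iff_one M |>.mpr ?_)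
        have h1 : (1 : ↥Z) ∈ Ideal.comap ι M := by rw [h]; trivial
        simpa using h1
      refine Ideal.Quotient.maximal_of_isField _ ?_
      haveI := Ideal.Quotient.nontrivial_iff.mpr hmne
      refine ⟨⟨0, 1, zero_ne_one⟩, mul_comm, ?_⟩
      intro a ha0
      obtain ⟨x, rfl⟩ := Ideal.Quotient.mk_surjective a
      have hxM : ((x : ↥Z) : R) ∉ M := by
        intro hc
        apply ha0
        rw [Ideal.Quotient.eq_zero_iff_mem]
        exact hc
      have hqx : (Ideal.Quotient.mk M ((x : ↥Z) : R)) ≠ 0 := by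
        rw [Ne, Ideal.Quotient.eq_zero_iff_mem]
        exact hxM
      have hqxS : (Ideal.Quotient.mk M ((x : ↥Z) : R)) ∈ S' := ⟨((x : ↥Z) : R), x.2, rfl⟩
      have hxS0 : (⟨Ideal.Quotient.mk M ((x : ↥Z) : R), hqxS⟩ : ↥S') ≠ 0 :=
        fun hc => hqx (congrArg Subtype.val hc)
      obtain ⟨binv, hbinv⟩ := hSfield.mul_inv_cancel hxS0
      obtain ⟨y, hyZ, hy⟩ := binv.2
      refine ⟨Ideal.Quotient.mk _ ⟨y, hyZ⟩, ?_⟩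
      rw [← map_mul, ← map_one (Ideal.Quotient.mk (Ideal.comap ι M)), Ideal.Quotient.eq]
      have hq1 : Ideal.Quotient.mk M (((x : ↥Z) : R) * y) = 1 := by
        rw [map_mul]
        have hyv : Ideal.Quotient.mk M y = (binv : R ⧸ M) := hy
        rw [hyv]
        exact congrArg Subtype.val hbinv
      have h2 := (Ideal.Quotient.eq (I := M)).mp
        (hq1.trans (map_one (Ideal.Quotient.mk M)).symm)
      show ι (x * ⟨y, hyZ⟩ - 1) ∈ M
      have h3 : ι (x * ⟨y, hyZ⟩ - 1) = ((x : ↥Z) : R) * y - 1 := by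
        push_cast
        rfl
      rw [h3]
      exact h2
    · intro N hN
      have hEne : Ideal.span (Subtype.val '' (N : Set ↥Z)) ≠ ⊤ := by
        intro h
        apply hN.ne_top
        rw [← hpure N, h, Ideal.comap_top]
      obtain ⟨M, hMmax, hME⟩ := Ideal.exists_le_maximal _ hEne
      refine ⟨M, hMmax, ?_⟩
      have hNle : N ≤ Ideal.comap ι M := by
        intro n hn
        rw [Ideal.mem_comap]
        exact hME (Ideal.subset_span ⟨n, hn, rfl⟩)
      have hMne : Ideal.comap ι M ≠ ⊤ := by
        intro h
        refine hMmax.ne_top (Ideal.eq_top_iff_one M |>.mpr ?_)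
        have h1 : (1 : ↥Z) ∈ Ideal.comap ι M := by rw [h]; trivial
        simpa using h1
      have hNM : Ideal.comap ι M = N := (hN.eq_of_le hMne hNle).symm
      rw [hcore_eq M, hNM]
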